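/- Let f ∈ L_2^X be an X-valued square-integrable function on [0,1) whose Haar-Fourier coefficients ⟨f, χ_{h+1}^{(2i-1)}⟩ and ⟨f, χ_{h+1}^{(2i)}⟩ both vanish. Then ⟨f ∘ φ_h^{(i)}, χ_h^{(i)}⟩ = 0 and ⟨f ∘ φ_h^{(i)}, χ_{h+1}^{(2i-1)}⟩ = ⟨f ∘ φ_h^{(i)}, χ_{h+1}^{(2i)}⟩ = ⟨f, χ_h^{(i)}⟩/√2. -/

import Mathlib

open MeasureTheory Set

/-- The Haar function `χ_k^{(j)}` on `[0,1)`. -/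
noncomputable def haar (k j : ℕ) (t : ℝ) : ℝ :=
  if ((2*j:ℝ)-2)/2^k ≤ t ∧ t < ((2*j:ℝ)-1)/2^k then (2:ℝ) ^ (((k:ℝ)-1)/2)
  else if ((2*j:ℝ)-1)/2^k ≤ t ∧ t < (2*j:ℝ)/2^k then -((2:ℝ) ^ (((k:ℝ)-1)/2))
  else 0

/-- The transformation `φ_h^{(i)}` interchanging `Δ_{h+1}^{(4i-2)}` and `Δ_{h+1}^{(4i-1)}`. -/
noncomputable def phi (h i : ℕ) (t : ℝ) : ℝ :=
  if ((4*i:ℝ)-3)/2^(h+1) ≤ t ∧ t < ((4*i:ℝ)-2)/2^(h+1) then t + 1/2^(h+1)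
  else if ((4*i:ℝ)-2)/2^(h+1) ≤ t ∧ t < ((4*i:ℝ)-1)/2^(h+1) then t - 1/2^(h+1)
  else t

/-- The Haar–Fourier coefficient `⟨f, χ_k^{(j)}⟩`. -/
noncomputable def haarCoeff {X : Type*} [NormedAddCommGroup X] [NormedSpace ℝ X]
    (f : ℝ → X) (k j : ℕ) : X :=
  ∫ t in Ico (0:ℝ) 1, haar k j t • f t

section Aux

set_option linter.unusedSectionVars false

variable {X : Type*} [NormedAddCommGroup X] [NormedSpace ℝ X] [CompleteSpace X]

lemma setIntegral_Ico_add' (f : ℝ → X) (p q L : ℝ) :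
    ∫ t in Ico p q, f (t + L) = ∫ t in Ico (p + L) (q + L), f t := by
  have h := (measurePreserving_add_right volume L).setIntegral_preimage_emb
      (measurableEmbedding_addRight L) f (Ico (p + L) (q + L))
  rwa [preimage_add_const_Ico, add_sub_cancel_right, add_sub_cancel_right] at h

lemma integrableOn_Ico_add' {f : ℝ → X} {p q : ℝ} (L : ℝ)
    (hf : IntegrableOn f (Ico (p + L) (q + L))) :
    IntegrableOn (fun t => f (t + L)) (Ico p q) := by
  have h := ((measurePreserving_add_right volume L).integrableOn_comp_preimage
      (measurableEmbedding_addRight L) (f := f) (s := Ico (p + L) (q + L))).2 hf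
  rwa [preimage_add_const_Ico, add_sub_cancel_right, add_sub_cancel_right] at h

lemma haarCoeff_formula (f : ℝ → X) (k j : ℕ)
    (hf1 : IntegrableOn f (Ico (((2*j:ℝ)-2)/2^k) (((2*j:ℝ)-1)/2^k)))
    (hf2 : IntegrableOn f (Ico (((2*j:ℝ)-1)/2^k) ((2*j:ℝ)/2^k)))
    (h0 : 0 ≤ ((2*j:ℝ)-2)/2^k) (h1 : (2*j:ℝ)/2^k ≤ 1) :
    haarCoeff f k j = (2:ℝ) ^ (((k:ℝ)-1)/2) •
      ((∫ t in Ico (((2*j:ℝ)-2)/2^k) (((2*j:ℝ)-1)/2^k), f t)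
        - ∫ t in Ico (((2*j:ℝ)-1)/2^k) ((2*j:ℝ)/2^k), f t) := by
  have h2k : (0:ℝ) < 2^k := by positivity
  set a : ℝ := ((2*j:ℝ)-2)/2^k with ha
  set b : ℝ := ((2*j:ℝ)-1)/2^k with hb
  set e : ℝ := (2*j:ℝ)/2^k with he
  set C : ℝ := (2:ℝ) ^ (((k:ℝ)-1)/2) with hC
  have hab : a ≤ b := by rw [ha, hb, div_le_div_iff_of_pos_right h2k]; linarith
  have hbe : b ≤ e := by rw [hb, he, div_le_div_iff_of_pos_right h2k]; linarith
  have hval1 : ∀ t ∈ Ico a b, haar k j t • f t = C • f t := by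
    intro t ht
    rw [haar, if_pos ⟨ht.1, ht.2⟩]
  have hval2 : ∀ t ∈ Ico b e, haar k j t • f t = (-C) • f t := by
    intro t ht
    rw [haar, if_neg (fun hc => absurd hc.2 (not_lt.2 ht.1)), if_pos ⟨ht.1, ht.2⟩]
  have hval0 : ∀ t ∈ Ico (0:ℝ) 1 \ Ico a e, haar k j t • f t = 0 := by
    intro t ht
    have hne : t ∉ Ico a e := ht.2
    rw [mem_Ico, not_and_or, not_le, not_lt] at hne
    have hz : haar k j t = 0 := by
      rcases hne with hta | hte
      · rw [haar, if_neg (fun hc => absurd hc.1 (not_le.2 hta)),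
          if_neg (fun hc => absurd hc.1 (not_le.2 (lt_of_lt_of_le hta hab)))]
      · rw [haar, if_neg (fun hc => absurd hc.2 (not_lt.2 (le_trans hbe hte))),
          if_neg (fun hc => absurd hc.2 (not_lt.2 hte))]
    rw [hz, zero_smul]
  have hi1 : IntegrableOn (fun t => haar k j t • f t) (Ico a b) := by
    exact IntegrableOn.congr_fun (hf1.smul C) (fun t ht => (hval1 t ht).symm) measurableSet_Ico
  have hi2 : IntegrableOn (fun t => haar k j t • f t) (Ico b e) := by
    exact IntegrableOn.congr_fun (hf2.smul (-C)) (fun t ht => (hval2 t ht).symm) measurableSet_Ico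
  have step1 : haarCoeff f k j = ∫ t in Ico a e, haar k j t • f t := by
    refine setIntegral_eq_of_subset_of_forall_diff_eq_zero measurableSet_Ico
      (Ico_subset_Ico h0 h1) hval0
  rw [step1, ← Ico_union_Ico_eq_Ico hab hbe,
    setIntegral_union (Ico_disjoint_Ico_same) measurableSet_Ico hi1 hi2,
    setIntegral_congr_fun measurableSet_Ico hval1,
    setIntegral_congr_fun measurableSet_Ico hval2,
    integral_smul, integral_smul, neg_smul, ← sub_eq_add_neg, ← smul_sub]

end Aux

/-- Shifting of Haar–Fourier coefficients under `φ_h^{(i)}`. -/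
theorem haarCoeff_comp_phi {X : Type*} [NormedAddCommGroup X] [NormedSpace ℝ X]
    [CompleteSpace X] (f : ℝ → X)
    (hf : MemLp f 2 (volume.restrict (Ico (0:ℝ) 1)))
    (h i : ℕ) (hh : 1 ≤ h) (hi : 1 ≤ i) (hi2 : i ≤ 2^(h-1))
    (h1 : haarCoeff f (h+1) (2*i-1) = 0) (h2 : haarCoeff f (h+1) (2*i) = 0) :
    haarCoeff (f ∘ phi h i) h i = 0 ∧
    haarCoeff (f ∘ phi h i) (h+1) (2*i-1) = (Real.sqrt 2)⁻¹ • haarCoeff f h i ∧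
    haarCoeff (f ∘ phi h i) (h+1) (2*i) = (Real.sqrt 2)⁻¹ • haarCoeff f h i := by
  have hpow : (0:ℝ) < 2^(h+1) := by positivity
  have hpowh : (0:ℝ) < 2^h := by positivity
  have hiR : (1:ℝ) ≤ (i:ℝ) := by exact_mod_cast hi
  -- `4 i ≤ 2^(h+1)`
  have hn4 : 4*i ≤ 2^(h+1) := by
    have e1 : h + 1 = (h-1) + 2 := by omega
    calc 4*i ≤ 4*2^(h-1) := by exact Nat.mul_le_mul_left 4 hi2
    _ = 2^((h-1)+2) := by ring
    _ = 2^(h+1) := by rw [← e1]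
  have h4i : (4:ℝ)*(i:ℝ) ≤ 2^(h+1) := by exact_mod_cast hn4
  -- `2 i ≤ 2^h`
  have hn2 : 2*i ≤ 2^h := by
    have e1 : h = (h-1) + 1 := by omega
    calc 2*i ≤ 2*2^(h-1) := by exact Nat.mul_le_mul_left 2 hi2
    _ = 2^((h-1)+1) := by ring
    _ = 2^h := by rw [← e1]
  have h2i : (2:ℝ)*(i:ℝ) ≤ 2^h := by exact_mod_cast hn2
  -- endpoint identities
  have w0 : ((2*i:ℝ)-2)/2^h = ((4*i:ℝ)-4)/2^(h+1) := by
    rw [pow_succ, div_eq_div_iff hpowh.ne' (by positivity : (0:ℝ) < 2^h*2).ne']; ring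
  have w1 : ((2*i:ℝ)-1)/2^h = ((4*i:ℝ)-2)/2^(h+1) := by
    rw [pow_succ, div_eq_div_iff hpowh.ne' (by positivity : (0:ℝ) < 2^h*2).ne']; ring
  have w2 : (2*i:ℝ)/2^h = (4*i:ℝ)/2^(h+1) := by
    rw [pow_succ, div_eq_div_iff hpowh.ne' (by positivity : (0:ℝ) < 2^h*2).ne']; ring
  have hc1 : ((2*i-1:ℕ):ℝ) = 2*(i:ℝ)-1 := by
    rw [Nat.cast_sub (by omega : (1:ℕ) ≤ 2*i)]; push_cast; ring
  have v0 : ((2*(2*i-1:ℕ):ℝ)-2)/2^(h+1) = ((4*i:ℝ)-4)/2^(h+1) := by rw [hc1]; ring_nf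
  have v1 : ((2*(2*i-1:ℕ):ℝ)-1)/2^(h+1) = ((4*i:ℝ)-3)/2^(h+1) := by rw [hc1]; ring_nf
  have v2 : (2*(2*i-1:ℕ):ℝ)/2^(h+1) = ((4*i:ℝ)-2)/2^(h+1) := by rw [hc1]; ring_nf
  have u0 : ((2*(2*i:ℕ):ℝ)-2)/2^(h+1) = ((4*i:ℝ)-2)/2^(h+1) := by push_cast; ring_nf
  have u1 : ((2*(2*i:ℕ):ℝ)-1)/2^(h+1) = ((4*i:ℝ)-1)/2^(h+1) := by push_cast; ring_nf
  have u2 : (2*(2*i:ℕ):ℝ)/2^(h+1) = (4*i:ℝ)/2^(h+1) := by push_cast; ring_nf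
  -- ordering
  have le01 : ((4*i:ℝ)-4)/2^(h+1) ≤ ((4*i:ℝ)-3)/2^(h+1) := by rw [div_le_div_iff_of_pos_right hpow]; linarith
  have le12 : ((4*i:ℝ)-3)/2^(h+1) ≤ ((4*i:ℝ)-2)/2^(h+1) := by rw [div_le_div_iff_of_pos_right hpow]; linarith
  have le23 : ((4*i:ℝ)-2)/2^(h+1) ≤ ((4*i:ℝ)-1)/2^(h+1) := by rw [div_le_div_iff_of_pos_right hpow]; linarith
  have le34 : ((4*i:ℝ)-1)/2^(h+1) ≤ (4*i:ℝ)/2^(h+1) := by rw [div_le_div_iff_of_pos_right hpow]; linarith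
  have b0 : (0:ℝ) ≤ ((4*i:ℝ)-4)/2^(h+1) := div_nonneg (by linarith) hpow.le
  have b1 : (0:ℝ) ≤ ((4*i:ℝ)-3)/2^(h+1) := le_trans b0 le01
  have b2 : (0:ℝ) ≤ ((4*i:ℝ)-2)/2^(h+1) := le_trans b1 le12
  have b3 : (0:ℝ) ≤ ((4*i:ℝ)-1)/2^(h+1) := le_trans b2 le23
  have t4 : (4*i:ℝ)/2^(h+1) ≤ 1 := by rw [div_le_one hpow]; linarith
  have t3 : ((4*i:ℝ)-1)/2^(h+1) ≤ 1 := le_trans le34 t4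
  have t2 : ((4*i:ℝ)-2)/2^(h+1) ≤ 1 := le_trans le23 t3
  have t1 : ((4*i:ℝ)-3)/2^(h+1) ≤ 1 := le_trans le12 t2
  -- integrability of f
  have hfact : Fact (volume (Ico (0:ℝ) 1) < ⊤) := ⟨by simp⟩
  have hfint : IntegrableOn f (Ico (0:ℝ) 1) := hf.integrable one_le_two
  have hsub : ∀ p q : ℝ, 0 ≤ p → q ≤ 1 → IntegrableOn f (Ico p q) :=
    fun p q hp hq => hfint.mono_set (Ico_subset_Ico hp hq)
  have hI01 : IntegrableOn f (Ico (((4*i:ℝ)-4)/2^(h+1)) (((4*i:ℝ)-3)/2^(h+1))) := hsub _ _ b0 t1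
  have hI12 : IntegrableOn f (Ico (((4*i:ℝ)-3)/2^(h+1)) (((4*i:ℝ)-2)/2^(h+1))) := hsub _ _ b1 t2
  have hI23 : IntegrableOn f (Ico (((4*i:ℝ)-2)/2^(h+1)) (((4*i:ℝ)-1)/2^(h+1))) := hsub _ _ b2 t3
  have hI34 : IntegrableOn f (Ico (((4*i:ℝ)-1)/2^(h+1)) ((4*i:ℝ)/2^(h+1))) := hsub _ _ b3 t4
  -- phi pointwise
  have hphiA : ∀ t ∈ Ico (((4*i:ℝ)-4)/2^(h+1)) (((4*i:ℝ)-3)/2^(h+1)), phi h i t = t := by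
    intro t ht
    rw [phi, if_neg (fun hc => absurd hc.1 (not_le.2 ht.2)),
      if_neg (fun hc => absurd hc.1 (not_le.2 (lt_of_lt_of_le ht.2 le12)))]
  have hphiB : ∀ t ∈ Ico (((4*i:ℝ)-3)/2^(h+1)) (((4*i:ℝ)-2)/2^(h+1)), phi h i t = t + 1/2^(h+1) := by
    intro t ht; rw [phi, if_pos ⟨ht.1, ht.2⟩]
  have hphiC : ∀ t ∈ Ico (((4*i:ℝ)-2)/2^(h+1)) (((4*i:ℝ)-1)/2^(h+1)), phi h i t = t - 1/2^(h+1) := by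
    intro t ht
    rw [phi, if_neg (fun hc => absurd hc.2 (not_lt.2 ht.1)), if_pos ⟨ht.1, ht.2⟩]
  have hphiD : ∀ t ∈ Ico (((4*i:ℝ)-1)/2^(h+1)) ((4*i:ℝ)/2^(h+1)), phi h i t = t := by
    intro t ht
    rw [phi, if_neg (fun hc => absurd hc.2 (not_lt.2 (le_trans le23 ht.1))),
      if_neg (fun hc => absurd hc.2 (not_lt.2 ht.1))]
  -- translation identities
  have hadd1 : ((4*i:ℝ)-3)/2^(h+1) + 1/2^(h+1) = ((4*i:ℝ)-2)/2^(h+1) := by rw [← add_div]; ring_nf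
  have hadd2 : ((4*i:ℝ)-2)/2^(h+1) + 1/2^(h+1) = ((4*i:ℝ)-1)/2^(h+1) := by rw [← add_div]; ring_nf
  have hsub2 : ((4*i:ℝ)-2)/2^(h+1) + -(1/2^(h+1)) = ((4*i:ℝ)-3)/2^(h+1) := by
    rw [← sub_eq_add_neg, div_sub_div_same]; ring_nf
  have hsub3 : ((4*i:ℝ)-1)/2^(h+1) + -(1/2^(h+1)) = ((4*i:ℝ)-2)/2^(h+1) := by
    rw [← sub_eq_add_neg, div_sub_div_same]; ring_nf
  -- integrability of g on pieces
  have hgA : IntegrableOn (f ∘ phi h i) (Ico (((4*i:ℝ)-4)/2^(h+1)) (((4*i:ℝ)-3)/2^(h+1))) :=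
    IntegrableOn.congr_fun hI01
      (fun t ht => by simp only [Function.comp_apply, hphiA t ht]) measurableSet_Ico
  have hgB : IntegrableOn (f ∘ phi h i) (Ico (((4*i:ℝ)-3)/2^(h+1)) (((4*i:ℝ)-2)/2^(h+1))) := by
    have hsh : IntegrableOn (fun t => f (t + 1/2^(h+1))) (Ico (((4*i:ℝ)-3)/2^(h+1)) (((4*i:ℝ)-2)/2^(h+1))) :=
      integrableOn_Ico_add' _ (by rw [hadd1, hadd2]; exact hI23)
    exact IntegrableOn.congr_fun hsh
      (fun t ht => by simp only [Function.comp_apply, hphiB t ht]) measurableSet_Ico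
  have hgC : IntegrableOn (f ∘ phi h i) (Ico (((4*i:ℝ)-2)/2^(h+1)) (((4*i:ℝ)-1)/2^(h+1))) := by
    have hsh : IntegrableOn (fun t => f (t + -(1/2^(h+1)))) (Ico (((4*i:ℝ)-2)/2^(h+1)) (((4*i:ℝ)-1)/2^(h+1))) :=
      integrableOn_Ico_add' _ (by rw [hsub2, hsub3]; exact hI12)
    exact IntegrableOn.congr_fun hsh
      (fun t ht => by simp only [Function.comp_apply, hphiC t ht, sub_eq_add_neg]) measurableSet_Ico
  have hgD : IntegrableOn (f ∘ phi h i) (Ico (((4*i:ℝ)-1)/2^(h+1)) ((4*i:ℝ)/2^(h+1))) :=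
    IntegrableOn.congr_fun hI34
      (fun t ht => by simp only [Function.comp_apply, hphiD t ht]) measurableSet_Ico
  -- integrals of g on pieces
  have IA : (∫ t in Ico (((4*i:ℝ)-4)/2^(h+1)) (((4*i:ℝ)-3)/2^(h+1)), (f ∘ phi h i) t) = ∫ t in Ico (((4*i:ℝ)-4)/2^(h+1)) (((4*i:ℝ)-3)/2^(h+1)), f t :=
    setIntegral_congr_fun measurableSet_Ico
      (fun t ht => by simp only [Function.comp_apply, hphiA t ht])
  have IB : (∫ t in Ico (((4*i:ℝ)-3)/2^(h+1)) (((4*i:ℝ)-2)/2^(h+1)), (f ∘ phi h i) t) = ∫ t in Ico (((4*i:ℝ)-2)/2^(h+1)) (((4*i:ℝ)-1)/2^(h+1)), f t := by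
    calc (∫ t in Ico (((4*i:ℝ)-3)/2^(h+1)) (((4*i:ℝ)-2)/2^(h+1)), (f ∘ phi h i) t)
        = ∫ t in Ico (((4*i:ℝ)-3)/2^(h+1)) (((4*i:ℝ)-2)/2^(h+1)), f (t + 1/2^(h+1)) :=
          setIntegral_congr_fun measurableSet_Ico
            (fun t ht => by simp only [Function.comp_apply, hphiB t ht])
      _ = ∫ t in Ico (((4*i:ℝ)-3)/2^(h+1) + 1/2^(h+1)) (((4*i:ℝ)-2)/2^(h+1) + 1/2^(h+1)), f t := setIntegral_Ico_add' f _ _ _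
      _ = ∫ t in Ico (((4*i:ℝ)-2)/2^(h+1)) (((4*i:ℝ)-1)/2^(h+1)), f t := by rw [hadd1, hadd2]
  have IC : (∫ t in Ico (((4*i:ℝ)-2)/2^(h+1)) (((4*i:ℝ)-1)/2^(h+1)), (f ∘ phi h i) t) = ∫ t in Ico (((4*i:ℝ)-3)/2^(h+1)) (((4*i:ℝ)-2)/2^(h+1)), f t := by
    calc (∫ t in Ico (((4*i:ℝ)-2)/2^(h+1)) (((4*i:ℝ)-1)/2^(h+1)), (f ∘ phi h i) t)
        = ∫ t in Ico (((4*i:ℝ)-2)/2^(h+1)) (((4*i:ℝ)-1)/2^(h+1)), f (t + -(1/2^(h+1))) :=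
          setIntegral_congr_fun measurableSet_Ico
            (fun t ht => by simp only [Function.comp_apply, hphiC t ht, sub_eq_add_neg])
      _ = ∫ t in Ico (((4*i:ℝ)-2)/2^(h+1) + -(1/2^(h+1))) (((4*i:ℝ)-1)/2^(h+1) + -(1/2^(h+1))), f t := setIntegral_Ico_add' f _ _ _
      _ = ∫ t in Ico (((4*i:ℝ)-3)/2^(h+1)) (((4*i:ℝ)-2)/2^(h+1)), f t := by rw [hsub2, hsub3]
  have ID : (∫ t in Ico (((4*i:ℝ)-1)/2^(h+1)) ((4*i:ℝ)/2^(h+1)), (f ∘ phi h i) t) = ∫ t in Ico (((4*i:ℝ)-1)/2^(h+1)) ((4*i:ℝ)/2^(h+1)), f t :=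
    setIntegral_congr_fun measurableSet_Ico
      (fun t ht => by simp only [Function.comp_apply, hphiD t ht])
  -- splittings
  have S02 : (∫ t in Ico (((4*i:ℝ)-4)/2^(h+1)) (((4*i:ℝ)-2)/2^(h+1)), f t)
      = (∫ t in Ico (((4*i:ℝ)-4)/2^(h+1)) (((4*i:ℝ)-3)/2^(h+1)), f t) + ∫ t in Ico (((4*i:ℝ)-3)/2^(h+1)) (((4*i:ℝ)-2)/2^(h+1)), f t := by
    rw [← Ico_union_Ico_eq_Ico le01 le12,
      setIntegral_union Ico_disjoint_Ico_same measurableSet_Ico hI01 hI12]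
  have S24 : (∫ t in Ico (((4*i:ℝ)-2)/2^(h+1)) ((4*i:ℝ)/2^(h+1)), f t)
      = (∫ t in Ico (((4*i:ℝ)-2)/2^(h+1)) (((4*i:ℝ)-1)/2^(h+1)), f t) + ∫ t in Ico (((4*i:ℝ)-1)/2^(h+1)) ((4*i:ℝ)/2^(h+1)), f t := by
    rw [← Ico_union_Ico_eq_Ico le23 le34,
      setIntegral_union Ico_disjoint_Ico_same measurableSet_Ico hI23 hI34]
  have S02g : (∫ t in Ico (((4*i:ℝ)-4)/2^(h+1)) (((4*i:ℝ)-2)/2^(h+1)), (f ∘ phi h i) t)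
      = (∫ t in Ico (((4*i:ℝ)-4)/2^(h+1)) (((4*i:ℝ)-3)/2^(h+1)), (f ∘ phi h i) t)
        + ∫ t in Ico (((4*i:ℝ)-3)/2^(h+1)) (((4*i:ℝ)-2)/2^(h+1)), (f ∘ phi h i) t := by
    rw [← Ico_union_Ico_eq_Ico le01 le12,
      setIntegral_union Ico_disjoint_Ico_same measurableSet_Ico hgA hgB]
  have S24g : (∫ t in Ico (((4*i:ℝ)-2)/2^(h+1)) ((4*i:ℝ)/2^(h+1)), (f ∘ phi h i) t)
      = (∫ t in Ico (((4*i:ℝ)-2)/2^(h+1)) (((4*i:ℝ)-1)/2^(h+1)), (f ∘ phi h i) t)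
        + ∫ t in Ico (((4*i:ℝ)-1)/2^(h+1)) ((4*i:ℝ)/2^(h+1)), (f ∘ phi h i) t := by
    rw [← Ico_union_Ico_eq_Ico le23 le34,
      setIntegral_union Ico_disjoint_Ico_same measurableSet_Ico hgC hgD]
  -- formula applications
  have hp0 : (0:ℝ) ≤ ((2*i:ℝ)-2)/2^h := by rw [w0]; exact b0
  have hp1 : (2*i:ℝ)/2^h ≤ 1 := by rw [w2]; exact t4
  have F0 := haarCoeff_formula f h i (by rw [w0, w1]; exact hsub _ _ b0 t2)
    (by rw [w1, w2]; exact hsub _ _ b2 t4) hp0 hp1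
  rw [w0, w1, w2] at F0
  have F1 := haarCoeff_formula f (h+1) (2*i-1) (by rw [v0, v1]; exact hI01)
    (by rw [v1, v2]; exact hI12) (by rw [v0]; exact b0) (by rw [v2]; exact t2)
  rw [v0, v1, v2] at F1
  have F2 := haarCoeff_formula f (h+1) (2*i) (by rw [u0, u1]; exact hI23)
    (by rw [u1, u2]; exact hI34) (by rw [u0]; exact b2) (by rw [u2]; exact t4)
  rw [u0, u1, u2] at F2
  have F0g := haarCoeff_formula (f ∘ phi h i) h i
    (by rw [w0, w1]; rw [← Ico_union_Ico_eq_Ico le01 le12]; exact hgA.union hgB)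
    (by rw [w1, w2]; rw [← Ico_union_Ico_eq_Ico le23 le34]; exact hgC.union hgD) hp0 hp1
  rw [w0, w1, w2] at F0g
  have F1g := haarCoeff_formula (f ∘ phi h i) (h+1) (2*i-1) (by rw [v0, v1]; exact hgA)
    (by rw [v1, v2]; exact hgB) (by rw [v0]; exact b0) (by rw [v2]; exact t2)
  rw [v0, v1, v2] at F1g
  have F2g := haarCoeff_formula (f ∘ phi h i) (h+1) (2*i) (by rw [u0, u1]; exact hgC)
    (by rw [u1, u2]; exact hgD) (by rw [u0]; exact b2) (by rw [u2]; exact t4)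
  rw [u0, u1, u2] at F2g
  -- cast of h+1 in constants
  have hcast1 : ((h+1:ℕ):ℝ) = (h:ℝ)+1 := by push_cast; ring
  rw [hcast1] at F1 F2 F1g F2g
  have hCne : ((2:ℝ) ^ ((((h:ℝ)+1)-1)/2)) ≠ 0 := by positivity
  -- consequences of vanishing coefficients
  have hAB : (∫ t in Ico (((4*i:ℝ)-4)/2^(h+1)) (((4*i:ℝ)-3)/2^(h+1)), f t) = ∫ t in Ico (((4*i:ℝ)-3)/2^(h+1)) (((4*i:ℝ)-2)/2^(h+1)), f t := by
    rw [h1] at F1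
    have := (smul_eq_zero.1 F1.symm).resolve_left hCne
    exact sub_eq_zero.1 this
  have hCD : (∫ t in Ico (((4*i:ℝ)-2)/2^(h+1)) (((4*i:ℝ)-1)/2^(h+1)), f t) = ∫ t in Ico (((4*i:ℝ)-1)/2^(h+1)) ((4*i:ℝ)/2^(h+1)), f t := by
    rw [h2] at F2
    have := (smul_eq_zero.1 F2.symm).resolve_left hCne
    exact sub_eq_zero.1 this
  -- the constant identity
  have hc2 : (Real.sqrt 2)⁻¹ * ((2:ℝ)^(((h:ℝ)-1)/2) * 2) = (2:ℝ) ^ ((((h:ℝ)+1)-1)/2) := by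
    rw [inv_mul_eq_div, mul_div_assoc, Real.div_sqrt, Real.sqrt_eq_rpow,
      ← Real.rpow_add two_pos]
    congr 1
    ring
  -- common right-hand side
  have key : (Real.sqrt 2)⁻¹ • haarCoeff f h i
      = ((2:ℝ) ^ ((((h:ℝ)+1)-1)/2)) •
        ((∫ t in Ico (((4*i:ℝ)-4)/2^(h+1)) (((4*i:ℝ)-3)/2^(h+1)), f t) - ∫ t in Ico (((4*i:ℝ)-2)/2^(h+1)) (((4*i:ℝ)-1)/2^(h+1)), f t) := by
    rw [F0, S02, S24, ← hAB, ← hCD]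
    have hx : (∫ t in Ico (((4*i:ℝ)-4)/2^(h+1)) (((4*i:ℝ)-3)/2^(h+1)), f t) + (∫ t in Ico (((4*i:ℝ)-4)/2^(h+1)) (((4*i:ℝ)-3)/2^(h+1)), f t)
        - ((∫ t in Ico (((4*i:ℝ)-2)/2^(h+1)) (((4*i:ℝ)-1)/2^(h+1)), f t) + (∫ t in Ico (((4*i:ℝ)-2)/2^(h+1)) (((4*i:ℝ)-1)/2^(h+1)), f t))
        = (2:ℝ) • ((∫ t in Ico (((4*i:ℝ)-4)/2^(h+1)) (((4*i:ℝ)-3)/2^(h+1)), f t) - ∫ t in Ico (((4*i:ℝ)-2)/2^(h+1)) (((4*i:ℝ)-1)/2^(h+1)), f t) := by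
      rw [smul_sub, two_smul, two_smul]
    rw [hx, smul_smul, smul_smul]
    congr 1
    rw [mul_assoc]
    exact hc2
  refine ⟨?_, ?_, ?_⟩
  · rw [F0g, S02g, S24g, IA, IB, IC, ID, ← hAB, ← hCD, add_comm (∫ t in Ico (((4*i:ℝ)-4)/2^(h+1)) (((4*i:ℝ)-3)/2^(h+1)), f t)]
    rw [sub_self, smul_zero]
  · rw [F1g, IA, IB, key]
  · rw [F2g, IC, ID, key, ← hAB, ← hCD]
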